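/- Let s ∈ ℝ, p ∈ (0,∞), q ∈ (p,∞), τ ∈ (0, 1/p - 1/q]. Define t = {t_Q} by t_Q = |R_j|^{s/n + 1/2 + τ - 1/p} when Q = R_j := [0,2^{-j})^n for some j ∈ ℤ, and t_Q = 0 otherwise. Then the Besov-type sequence norm ‖t‖_{ḃ^{s,τ}_{p,q}} is finite (in fact bounded by a constant depending only on n, p, q, τ), while ‖t‖_{ḃ^{s,τ+1/q-1/p}_{q,q}} = ∞. Hence ḃ^{s,τ+1/q-1/p}_{q,q}(ℝⁿ) is a proper subspace of ḃ^{s,τ}_{p,q}(ℝⁿ). -/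

import Mathlib

open MeasureTheory ENNReal

/-- A dyadic cube `Q_{jk} = 2^{-j}([0,1)^n + k)` in `ℝⁿ`, recorded by its
generation `j ∈ ℤ` and position `k ∈ ℤⁿ`. -/
structure DyadicCube (n : ℕ) where
  j : ℤ
  k : Fin n → ℤ

namespace DyadicCube

/-- The dyadic cube as a subset of `ℝⁿ`. -/
def toSet {n : ℕ} (Q : DyadicCube n) : Set (Fin n → ℝ) :=
  {x | ∀ i, (Q.k i : ℝ) * (2 : ℝ) ^ (-Q.j) ≤ x i ∧
        x i < ((Q.k i : ℝ) + 1) * (2 : ℝ) ^ (-Q.j)}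

/-- The Lebesgue measure `|Q| = 2^{-jn}` of a dyadic cube, as an element of `ℝ≥0∞`. -/
noncomputable def vol {n : ℕ} (Q : DyadicCube n) : ℝ≥0∞ :=
  (2 : ℝ≥0∞) ^ (-(Q.j : ℝ) * n)

/-- The characteristic function `χ_Q`, with values in `ℝ≥0∞`. -/
noncomputable def ind {n : ℕ} (Q : DyadicCube n) (x : Fin n → ℝ) : ℝ≥0∞ :=
  Q.toSet.indicator (fun _ => (1 : ℝ≥0∞)) x

end DyadicCube

open DyadicCube

/-- The coefficient `|Q|^{-s/n - 1/2}`. -/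
noncomputable def coeff {n : ℕ} (s : ℝ) (Q : DyadicCube n) : ℝ≥0∞ :=
  Q.vol ^ (-(s / (n : ℝ)) - 1 / 2)

/-- The `ℓ^q`-norm `(Σ_i a_i^q)^{1/q}` of a family of extended nonnegative reals,
with the usual modification (`sup`) when `q = ∞`. -/
noncomputable def lqSum {ι : Type*} (q : ℝ≥0∞) (a : ι → ℝ≥0∞) : ℝ≥0∞ :=
  if q = ∞ then ⨆ i, a i else (∑' i, a i ^ q.toReal) ^ (1 / q.toReal)

/-- The `L^p`-norm `(∫_A g^p dx)^{1/p}` over a set `A ⊆ ℝⁿ`, with the usual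
modification (`sup` over `x ∈ A`) when `p = ∞`. -/
noncomputable def lpIntOn {n : ℕ} (p : ℝ≥0∞) (A : Set (Fin n → ℝ))
    (g : (Fin n → ℝ) → ℝ≥0∞) : ℝ≥0∞ :=
  if p = ∞ then ⨆ x ∈ A, g x
  else (∫⁻ x in A, g x ^ p.toReal) ^ (1 / p.toReal)

/-- The Triebel–Lizorkin-type sequence norm
`‖t‖_{ḟ^{s,τ}_{p,q}} = sup_P |P|^{-τ} ( ∫_P ( Σ_{Q ⊆ P} [|Q|^{-s/n-1/2} |t_Q| χ_Q(x)]^q )^{p/q} dx )^{1/p}`,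
with the usual modifications when `p = ∞` or `q = ∞`. -/
noncomputable def fNorm (n : ℕ) (s τ : ℝ) (p q : ℝ≥0∞) (t : DyadicCube n → ℂ) : ℝ≥0∞ :=
  ⨆ P : DyadicCube n, P.vol ^ (-τ) *
    lpIntOn p P.toSet fun x =>
      lqSum q fun Q : {Q : DyadicCube n // Q.toSet ⊆ P.toSet} =>
        coeff s Q.1 * ‖t Q.1‖₊ * ind Q.1 x

/-- The Besov-type sequence norm
`‖t‖_{ḃ^{s,τ}_{p,q}} = sup_P |P|^{-τ} ( Σ_{j ≥ j_P} ( ∫_P [ Σ_{Q ⊆ P, ℓ(Q)=2^{-j}} |Q|^{-s/n-1/2} |t_Q| χ_Q(x) ]^p dx )^{q/p} )^{1/q}`,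
with the usual modifications when `p = ∞` or `q = ∞`. -/
noncomputable def bNorm (n : ℕ) (s τ : ℝ) (p q : ℝ≥0∞) (t : DyadicCube n → ℂ) : ℝ≥0∞ :=
  ⨆ P : DyadicCube n, P.vol ^ (-τ) *
    lqSum q fun j : {j : ℤ // P.j ≤ j} =>
      lpIntOn p P.toSet fun x =>
        ∑' Q : {Q : DyadicCube n // Q.toSet ⊆ P.toSet ∧ Q.j = j.1},
          coeff s Q.1 * ‖t Q.1‖₊ * ind Q.1 x

/-- The `ḟ^{σ}_{∞,∞} = ḃ^{σ}_{∞,∞}` sequence norm `sup_Q |Q|^{-σ/n - 1/2} |t_Q|`. -/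
noncomputable def supNorm (n : ℕ) (σ : ℝ) (t : DyadicCube n → ℂ) : ℝ≥0∞ :=
  ⨆ Q : DyadicCube n, coeff σ Q * ‖t Q‖₊

/-- The test sequence with `t_{R_j} = |R_j|^{s/n + 1/2 + τ - 1/p}` for
`R_j = [0,2^{-j})^n` (the dyadic cube with `k = 0`), and `t_Q = 0` otherwise. -/
noncomputable def testSeq (n : ℕ) (s τ p : ℝ) : DyadicCube n → ℂ := fun Q =>
  if Q.k = 0 then
    ((((2 : ℝ) ^ (-(Q.j : ℝ) * n)) ^ (s / n + 1 / 2 + τ - 1 / p) : ℝ) : ℂ)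
  else 0

/-- The cube `R_j = [0, 2^{-j})^n`. -/
def Rcube (n : ℕ) (j : ℤ) : DyadicCube n := ⟨j, 0⟩


section Aux
variable {n : ℕ}

lemma e2top : (2:ℝ≥0∞) ≠ ∞ := by simp
lemma e2zero : (2:ℝ≥0∞) ≠ 0 := by simp

lemma rpow2_ne_top (a : ℝ) : (2:ℝ≥0∞) ^ a ≠ ∞ := by
  simp [ENNReal.rpow_eq_top_iff]

lemma toSet_eq (Q : DyadicCube n) : Q.toSet =
    Set.univ.pi fun i => Set.Ico ((Q.k i:ℝ) * 2^(-Q.j)) (((Q.k i:ℝ)+1) * 2^(-Q.j)) := by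
  ext x; simp [DyadicCube.toSet, Set.mem_pi]

lemma measurableSet_toSet (Q : DyadicCube n) : MeasurableSet Q.toSet := by
  rw [toSet_eq]; exact MeasurableSet.univ_pi fun i => measurableSet_Ico

lemma volume_toSet (Q : DyadicCube n) : volume Q.toSet = Q.vol := by
  rw [toSet_eq, volume_pi_pi]
  have h1 : ∀ i : Fin n, volume (Set.Ico ((Q.k i:ℝ) * 2^(-Q.j)) (((Q.k i:ℝ)+1) * 2^(-Q.j)))
      = ENNReal.ofReal ((2:ℝ)^(-Q.j)) := by
    intro i; rw [Real.volume_Ico]; ring_nf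
  simp_rw [h1]
  rw [Finset.prod_const, Finset.card_univ, Fintype.card_fin]
  rw [show ((2:ℝ)^(-Q.j)) = (2:ℝ)^(((-Q.j : ℤ)):ℝ) from (Real.rpow_intCast 2 _).symm]
  rw [← ENNReal.ofReal_rpow_of_pos two_pos]
  rw [← ENNReal.rpow_natCast, ← ENNReal.rpow_mul]
  unfold DyadicCube.vol
  norm_num

lemma vol_R (j : ℤ) : (Rcube n j).vol = (2:ℝ≥0∞) ^ (-(j:ℝ) * n) := rfl

lemma mem_R_toSet {j : ℤ} {x : Fin n → ℝ} :
    x ∈ (Rcube n j).toSet ↔ ∀ i, 0 ≤ x i ∧ x i < 2 ^ (-j) := by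
  simp [Rcube, DyadicCube.toSet]

/-- zero belongs to every `R_j`. -/
lemma zero_mem_R (j : ℤ) : (0 : Fin n → ℝ) ∈ (Rcube n j).toSet := by
  rw [mem_R_toSet]; intro i; constructor
  · simp
  · simpa using zpow_pos (by norm_num : (0:ℝ) < 2) (-j)

/-- If `R_j ⊆ P` then `P.k = 0`. -/
lemma k_eq_zero_of_R_subset {j : ℤ} {P : DyadicCube n}
    (h : (Rcube n j).toSet ⊆ P.toSet) : P.k = 0 := by
  have h0 := h (zero_mem_R j)
  funext i
  have hi := h0 i
  simp only [Pi.zero_apply] at hi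
  have hc : (0:ℝ) < 2 ^ (-P.j) := zpow_pos (by norm_num) _
  have h1 : (P.k i : ℝ) ≤ 0 := by
    by_contra hcon; push_neg at hcon; nlinarith [hi.1]
  have h2 : (0:ℝ) < (P.k i : ℝ) + 1 := by
    by_contra hcon; push_neg at hcon; nlinarith [hi.2]
  have hk1 : P.k i ≤ 0 := by exact_mod_cast h1
  have hk2 : (-1:ℤ) < P.k i := by
    have : (-1:ℝ) < ((P.k i : ℤ):ℝ) := by linarith
    exact_mod_cast this
  simp only [Pi.zero_apply]; omega

lemma R_subset_R {m j : ℤ} (h : m ≤ j) : (Rcube n j).toSet ⊆ (Rcube n m).toSet := by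
  intro x hx
  rw [mem_R_toSet] at hx ⊢
  intro i
  refine ⟨(hx i).1, lt_of_lt_of_le (hx i).2 ?_⟩
  exact zpow_le_zpow_right₀ one_le_two (by omega)

lemma R_subset_R' {m j : ℤ} (h : m ≤ j) : (Rcube n j).toSet ⊆ (Rcube n m).toSet :=
  R_subset_R h

lemma nnorm_testSeq_R (s τ p : ℝ) (j : ℤ) :
    (‖testSeq n s τ p (Rcube n j)‖₊ : ℝ≥0∞)
      = (2:ℝ≥0∞) ^ ((-(j:ℝ)*n) * (s/n + 1/2 + τ - 1/p)) := by
  have hr : (0:ℝ) < (2:ℝ) ^ (-(j:ℝ)*n) := Real.rpow_pos_of_pos two_pos _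
  have hre : (0:ℝ) ≤ ((2:ℝ) ^ (-(j:ℝ)*n)) ^ (s/n + 1/2 + τ - 1/p) :=
    (Real.rpow_pos_of_pos hr _).le
  have ht : testSeq n s τ p (Rcube n j)
      = ((((2:ℝ) ^ (-(j:ℝ)*n)) ^ (s/n + 1/2 + τ - 1/p) : ℝ) : ℂ) := by
    simp [testSeq, Rcube]
  rw [ht, Complex.nnnorm_real]
  rw [← enorm_eq_nnnorm, Real.enorm_eq_ofReal hre]
  rw [← ENNReal.ofReal_rpow_of_pos hr, ← ENNReal.ofReal_rpow_of_pos two_pos]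
  rw [ENNReal.ofReal_ofNat, ← ENNReal.rpow_mul]

lemma coeff_R (s : ℝ) (j : ℤ) :
    coeff s (Rcube n j) = (2:ℝ≥0∞) ^ ((-(j:ℝ)*n) * (-(s/(n:ℝ)) - 1/2)) := by
  rw [coeff, vol_R, ← ENNReal.rpow_mul]

lemma cval (s τ p : ℝ) (j : ℤ) :
    coeff s (Rcube n j) * ‖testSeq n s τ p (Rcube n j)‖₊
      = (2:ℝ≥0∞) ^ ((-(j:ℝ)*n) * (τ - 1/p)) := by
  rw [coeff_R, nnorm_testSeq_R, ← ENNReal.rpow_add _ _ e2zero e2top]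
  congr 1
  ring

lemma lpIntOn_const_ind {p : ℝ} (hp : 0 < p) {P Q : DyadicCube n}
    (hQP : Q.toSet ⊆ P.toSet) (c : ℝ≥0∞) :
    lpIntOn (ENNReal.ofReal p) P.toSet (fun x => c * Q.ind x)
      = c * Q.vol ^ (1/p) := by
  rw [lpIntOn, if_neg ENNReal.ofReal_ne_top, ENNReal.toReal_ofReal hp.le]
  have hfun : ∀ x, (c * Q.ind x) ^ p = Q.toSet.indicator (fun _ => c ^ p) x := by
    intro x
    unfold DyadicCube.ind
    by_cases hx : x ∈ Q.toSet
    · simp [hx]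
    · simp [hx, ENNReal.zero_rpow_of_pos hp]
  simp_rw [hfun]
  rw [lintegral_indicator (measurableSet_toSet Q),
    Measure.restrict_restrict (measurableSet_toSet Q),
    Set.inter_eq_left.mpr hQP, setLIntegral_const, volume_toSet]
  rw [ENNReal.mul_rpow_of_nonneg _ _ (by positivity : (0:ℝ) ≤ 1/p), ← ENNReal.rpow_mul,
    mul_one_div_cancel hp.ne', ENNReal.rpow_one]

lemma tsum_level (s τ p : ℝ) {m j : ℤ} (hmj : m ≤ j) (x : Fin n → ℝ) :
    (∑' Q : {Q : DyadicCube n // Q.toSet ⊆ (Rcube n m).toSet ∧ Q.j = j},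
        coeff s Q.1 * ‖testSeq n s τ p Q.1‖₊ * Q.1.ind x)
      = coeff s (Rcube n j) * ‖testSeq n s τ p (Rcube n j)‖₊ * (Rcube n j).ind x := by
  apply tsum_eq_single
    (⟨Rcube n j, ⟨R_subset_R hmj, rfl⟩⟩ :
      {Q : DyadicCube n // Q.toSet ⊆ (Rcube n m).toSet ∧ Q.j = j})
  rintro ⟨Q, hQP, hj⟩ hne
  have hk : Q.k ≠ 0 := by
    intro hk0
    apply hne
    apply Subtype.ext
    show Q = Rcube n j
    cases Q
    subst hk0
    subst hj
    rfl
  simp [testSeq, hk]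

lemma tsum_level_zero (s τ p : ℝ) {P : DyadicCube n} (hP : P.k ≠ 0) (j : ℤ) (x : Fin n → ℝ) :
    (∑' Q : {Q : DyadicCube n // Q.toSet ⊆ P.toSet ∧ Q.j = j},
        coeff s Q.1 * ‖testSeq n s τ p Q.1‖₊ * Q.1.ind x) = 0 := by
  convert tsum_zero with Q
  rcases Q with ⟨Q, hQP, hj⟩
  have hk : Q.k ≠ 0 := by
    intro hk0
    apply hP
    have hQR : Q = Rcube n Q.j := by cases Q; simp_all [Rcube]
    exact k_eq_zero_of_R_subset (hQR ▸ hQP)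
  simp [testSeq, hk]


lemma lp_level (s τ p : ℝ) {r : ℝ} (hr : 0 < r) {m j : ℤ} (hmj : m ≤ j) :
    lpIntOn (ENNReal.ofReal r) (Rcube n m).toSet
      (fun x => ∑' Q : {Q : DyadicCube n // Q.toSet ⊆ (Rcube n m).toSet ∧ Q.j = j},
          coeff s Q.1 * ‖testSeq n s τ p Q.1‖₊ * Q.1.ind x)
      = (2:ℝ≥0∞) ^ ((-(j:ℝ)*n) * (τ - 1/p + 1/r)) := by
  have h1 : ∀ x : Fin n → ℝ,
      (∑' Q : {Q : DyadicCube n // Q.toSet ⊆ (Rcube n m).toSet ∧ Q.j = j},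
          coeff s Q.1 * ‖testSeq n s τ p Q.1‖₊ * Q.1.ind x)
      = (2:ℝ≥0∞) ^ ((-(j:ℝ)*n) * (τ - 1/p)) * (Rcube n j).ind x := by
    intro x
    rw [tsum_level s τ p hmj x, cval]
  simp_rw [h1]
  rw [lpIntOn_const_ind hr (R_subset_R hmj)]
  rw [vol_R, ← ENNReal.rpow_mul, ← ENNReal.rpow_add _ _ e2zero e2top]
  congr 1
  ring

lemma lp_level_zero (s τ p : ℝ) {r : ℝ} (hr : 0 < r) {P : DyadicCube n} (hP : P.k ≠ 0) (j : ℤ) :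
    lpIntOn (ENNReal.ofReal r) P.toSet
      (fun x => ∑' Q : {Q : DyadicCube n // Q.toSet ⊆ P.toSet ∧ Q.j = j},
          coeff s Q.1 * ‖testSeq n s τ p Q.1‖₊ * Q.1.ind x) = 0 := by
  have h1 : ∀ x : Fin n → ℝ,
      (∑' Q : {Q : DyadicCube n // Q.toSet ⊆ P.toSet ∧ Q.j = j},
          coeff s Q.1 * ‖testSeq n s τ p Q.1‖₊ * Q.1.ind x) = 0 :=
    tsum_level_zero s τ p hP j
  simp_rw [h1]
  rw [lpIntOn, if_neg ENNReal.ofReal_ne_top, ENNReal.toReal_ofReal hr.le]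
  simp only [ENNReal.zero_rpow_of_pos hr, lintegral_zero]
  exact ENNReal.zero_rpow_of_pos (by positivity)

def natEquivGe (m : ℤ) : ℕ ≃ {j : ℤ // m ≤ j} :=
  ⟨fun i => ⟨m + i, le_add_of_nonneg_right (Int.ofNat_nonneg i)⟩,
   fun j => (j.1 - m).toNat,
   fun i => by simp,
   fun j => Subtype.ext (by simp [Int.toNat_of_nonneg (sub_nonneg.mpr j.2)])⟩

lemma natEquivGe_val (m : ℤ) (i : ℕ) : ((natEquivGe m i : {j : ℤ // m ≤ j}) : ℤ) = m + i := by
  simp [natEquivGe]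

lemma tsum_pow2 (c : ℝ) (m : ℤ) :
    (∑' j : {j : ℤ // m ≤ j}, (2:ℝ≥0∞) ^ (-(j.1:ℝ) * c))
      = (2:ℝ≥0∞) ^ (-(m:ℝ) * c) * (1 - (2:ℝ≥0∞) ^ (-c))⁻¹ := by
  let e : ℕ ≃ {j : ℤ // m ≤ j} := natEquivGe m
  rw [← Equiv.tsum_eq e]
  have h : ∀ i : ℕ, (2:ℝ≥0∞) ^ (-((e i).1 : ℝ) * c)
      = (2:ℝ≥0∞) ^ (-(m:ℝ) * c) * ((2:ℝ≥0∞) ^ (-c)) ^ i := by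
    intro i
    rw [natEquivGe_val m i]
    rw [show ((m + (i:ℤ) : ℤ) : ℝ) = (m:ℝ) + (i:ℝ) by push_cast; ring, ← ENNReal.rpow_natCast ((2:ℝ≥0∞) ^ (-c)) i, ← ENNReal.rpow_mul,
      ← ENNReal.rpow_add _ _ e2zero e2top]
    congr 1
    ring
  simp_rw [h]
  rw [ENNReal.tsum_mul_left, ENNReal.tsum_geometric]

lemma tsum_pow2' (c : ℝ) (P : DyadicCube n) :
    (∑' j : {j : ℤ // P.j ≤ j}, (2:ℝ≥0∞) ^ (-(j.1:ℝ) * c))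
      = (2:ℝ≥0∞) ^ (-(P.j:ℝ) * c) * (1 - (2:ℝ≥0∞) ^ (-c))⁻¹ :=
  tsum_pow2 c P.j

end Aux

/-- for `s ∈ ℝ`, `p ∈ (0,∞)`, `q ∈ (p,∞)`, `τ ∈ (0, 1/p - 1/q]`, the test
sequence `t` (with `t_{R_j} = |R_j|^{s/n+1/2+τ-1/p}`, zero otherwise) has Besov-type
norm `‖t‖_{ḃ^{s,τ}_{p,q}}` bounded by a constant depending only on `n,p,q,τ`, while
`‖t‖_{ḃ^{s,τ+1/q-1/p}_{q,q}} = ∞`; hence `ḃ^{s,τ+1/q-1/p}_{q,q} ⊊ ḃ^{s,τ}_{p,q}`. -/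
theorem stmt5 (n : ℕ) (hn : 0 < n) (s p q τ : ℝ)
    (hp : 0 < p) (hpq : p < q) (hτ : 0 < τ) (hτ' : τ ≤ 1 / p - 1 / q) :
    (∃ C : ℝ≥0∞, C ≠ ∞ ∧
      bNorm n s τ (ENNReal.ofReal p) (ENNReal.ofReal q) (testSeq n s τ p) ≤ C) ∧
    bNorm n s (τ + 1 / q - 1 / p) (ENNReal.ofReal q) (ENNReal.ofReal q)
      (testSeq n s τ p) = ∞ := by
  have hq : 0 < q := hp.trans hpq
  have hn' : (0:ℝ) < n := by exact_mod_cast hn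
  constructor
  · have hrlt : (2:ℝ≥0∞) ^ (-((n:ℝ) * τ * q)) < 1 :=
      ENNReal.rpow_lt_one_of_one_lt_of_neg one_lt_two (by rw [neg_lt_zero]; positivity)
    refine ⟨(1 - (2:ℝ≥0∞) ^ (-((n:ℝ) * τ * q)))⁻¹ ^ (1/q), ?_, ?_⟩
    · apply ENNReal.rpow_ne_top_of_nonneg (by positivity)
      rw [Ne, ENNReal.inv_eq_top, tsub_eq_zero_iff_le]
      exact hrlt.not_ge
    · rw [bNorm]
      apply iSup_le
      intro P
      by_cases hPk : P.k = 0
      · have hPR : P = Rcube n P.j := by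
          cases P
          cases hPk
          rfl
        rw [hPR]
        rw [lqSum, if_neg ENNReal.ofReal_ne_top, ENNReal.toReal_ofReal hq.le]
        have hterm : ∀ j : {j : ℤ // (Rcube n P.j).j ≤ j},
            (lpIntOn (ENNReal.ofReal p) (Rcube n P.j).toSet fun x =>
              ∑' Q : {Q : DyadicCube n // Q.toSet ⊆ (Rcube n P.j).toSet ∧ Q.j = j.1},
                coeff s Q.1 * ‖testSeq n s τ p Q.1‖₊ * Q.1.ind x) ^ q
            = (2:ℝ≥0∞) ^ (-(j.1:ℝ) * ((n:ℝ) * τ * q)) := by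
          intro j
          rw [lp_level s τ p hp (show P.j ≤ j.1 from j.2), ← ENNReal.rpow_mul]
          congr 1
          field_simp
          ring
        simp_rw [hterm]
        rw [tsum_pow2' ((n:ℝ) * τ * q) (Rcube n P.j)]
        rw [ENNReal.mul_rpow_of_nonneg _ _ (by positivity : (0:ℝ) ≤ 1/q),
          ← ENNReal.rpow_mul, vol_R, ← ENNReal.rpow_mul, ← mul_assoc,
          ← ENNReal.rpow_add _ _ e2zero e2top]
        rw [show (((Rcube n P.j).j : ℤ) : ℝ) = ((P.j : ℤ) : ℝ) from rfl]
        have hz : (-((P.j:ℤ):ℝ) * (n:ℝ)) * (-τ)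
            + (-((P.j:ℤ):ℝ) * ((n:ℝ) * τ * q)) * (1/q) = 0 := by
          field_simp
          ring
        rw [hz, ENNReal.rpow_zero, one_mul]
      · have h0 : ∀ j : {j : ℤ // P.j ≤ j},
            (lpIntOn (ENNReal.ofReal p) P.toSet fun x =>
              ∑' Q : {Q : DyadicCube n // Q.toSet ⊆ P.toSet ∧ Q.j = j.1},
                coeff s Q.1 * ‖testSeq n s τ p Q.1‖₊ * Q.1.ind x) = 0 :=
          fun j => lp_level_zero s τ p hp hPk j.1
        rw [lqSum, if_neg ENNReal.ofReal_ne_top, ENNReal.toReal_ofReal hq.le]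
        simp_rw [h0]
        rw [ENNReal.zero_rpow_of_pos hq]
        rw [tsum_zero, ENNReal.zero_rpow_of_pos (by positivity), mul_zero]
        exact zero_le
  · rw [bNorm, eq_top_iff]
    refine le_trans ?_ (le_iSup _ (Rcube n (0:ℤ)))
    have hv : (Rcube n (0:ℤ)).vol ^ (-(τ + 1/q - 1/p)) = 1 := by
      rw [vol_R]
      norm_num
    rw [hv, one_mul, lqSum, if_neg ENNReal.ofReal_ne_top, ENNReal.toReal_ofReal hq.le]
    haveI : Infinite {j : ℤ // (Rcube n (0:ℤ)).j ≤ j} :=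
      Infinite.of_injective (fun i : ℕ => ⟨(i:ℤ), Int.ofNat_nonneg i⟩)
        (fun a b h => by exact_mod_cast Subtype.mk_eq_mk.mp h)
    have hone : ∀ j : {j : ℤ // (Rcube n (0:ℤ)).j ≤ j},
        (1:ℝ≥0∞) ≤ (lpIntOn (ENNReal.ofReal q) (Rcube n (0:ℤ)).toSet fun x =>
            ∑' Q : {Q : DyadicCube n // Q.toSet ⊆ (Rcube n (0:ℤ)).toSet ∧ Q.j = j.1},
              coeff s Q.1 * ‖testSeq n s τ p Q.1‖₊ * Q.1.ind x) ^ q := by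
      intro j
      rw [lp_level s τ p hq (show (0:ℤ) ≤ j.1 from j.2), ← ENNReal.rpow_mul]
      have hj0 : (0:ℝ) ≤ (j.1 : ℝ) := by exact_mod_cast j.2
      have hexp : (0:ℝ) ≤ (-(j.1:ℝ) * n) * (τ - 1/p + 1/q) * q := by
        have h1 : (-(j.1:ℝ) * n) ≤ 0 := by nlinarith
        have h2 : τ - 1/p + 1/q ≤ 0 := by linarith
        have h3 : (0:ℝ) ≤ (-((-(j.1:ℝ) * n))) * (-(τ - 1/p + 1/q)) :=
          mul_nonneg (by linarith) (by linarith)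
        nlinarith
      calc (1:ℝ≥0∞) = 2 ^ (0:ℝ) := by rw [ENNReal.rpow_zero]
        _ ≤ 2 ^ ((-(j.1:ℝ) * n) * (τ - 1/p + 1/q) * q) :=
          ENNReal.rpow_le_rpow_of_exponent_le one_le_two hexp
    have htop : (∑' j : {j : ℤ // (Rcube n (0:ℤ)).j ≤ j},
        (lpIntOn (ENNReal.ofReal q) (Rcube n (0:ℤ)).toSet fun x =>
            ∑' Q : {Q : DyadicCube n // Q.toSet ⊆ (Rcube n (0:ℤ)).toSet ∧ Q.j = j.1},
              coeff s Q.1 * ‖testSeq n s τ p Q.1‖₊ * Q.1.ind x) ^ q) = ⊤ := by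
      rw [eq_top_iff]
      calc (⊤:ℝ≥0∞) = ∑' _ : {j : ℤ // (Rcube n (0:ℤ)).j ≤ j}, (1:ℝ≥0∞) :=
            (ENNReal.tsum_const_eq_top_of_ne_zero one_ne_zero).symm
        _ ≤ _ := ENNReal.tsum_le_tsum hone
    rw [htop, ENNReal.top_rpow_of_pos (by positivity)]
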